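/- arXiv:1211.3868 — 2 statements merged into one kernel-verified Lean document; each statement's English description precedes it below -/
import Mathlib

section
/- Let X be càdlàg and X^c the constructed finite-variation approximation. Then the pair (X − X^c, −X^c) solves the Skorohod problem on [−c, c] for X: X(t) − X^c(t) ∈ [−c,c] for all t, and the measures dUTV(X^c,·) and dDTV(X^c,·) (positive and negative parts of dX^c) are carried by the sets {t : X(t) − X^c(t) = c} and {t : X(t) − X^c(t) = −c} respectively. -/
open Set Filter MeasureTheory
open scoped ENNReal NNReal Topology

noncomputable section

/-- A function is càdlàg: right-continuous with left limits. -/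
def Cadlag (f : ℝ → ℝ) : Prop :=
  (∀ t : ℝ, Tendsto f (nhdsWithin t (Ici t)) (nhds (f t))) ∧
  (∀ t : ℝ, ∃ l : ℝ, Tendsto f (nhdsWithin t (Iio t)) (nhds l))

/-- Jump of `f` at `s`. -/
def jumpAt (f : ℝ → ℝ) (s : ℝ) : ℝ := f s - Function.leftLim f s

def supOn (f : ℝ → ℝ) (a b : ℝ) : ℝ := sSup (f '' Icc a b)
def infOn (f : ℝ → ℝ) (a b : ℝ) : ℝ := sInf (f '' Icc a b)

def TuZero (X : ℝ → ℝ) (c : ℝ) : ℝ≥0∞ :=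
  sInf {u | ∃ s : ℝ, 0 ≤ s ∧ u = ENNReal.ofReal s ∧ supOn X 0 s - X 0 > c}

def TdIni (X : ℝ → ℝ) (c : ℝ) : ℝ≥0∞ :=
  sInf {u | ∃ s : ℝ, 0 ≤ s ∧ u = ENNReal.ofReal s ∧ X 0 - infOn X 0 s > c}

def nextTd (X : ℝ → ℝ) (c : ℝ) (a : ℝ≥0∞) : ℝ≥0∞ :=
  sInf {u | ∃ s : ℝ, 0 ≤ s ∧ a ≤ ENNReal.ofReal s ∧ u = ENNReal.ofReal s ∧
    supOn X a.toReal s - X s > 2 * c}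

def nextTu (X : ℝ → ℝ) (c : ℝ) (a : ℝ≥0∞) : ℝ≥0∞ :=
  sInf {u | ∃ s : ℝ, 0 ≤ s ∧ a ≤ ENNReal.ofReal s ∧ u = ENNReal.ofReal s ∧
    X s - infOn X a.toReal s > 2 * c}

def TuTd (X : ℝ → ℝ) (c : ℝ) : ℕ → ℝ≥0∞ × ℝ≥0∞
  | 0 => (TuZero X c, nextTd X c (TuZero X c))
  | (n + 1) =>
      let tu := nextTu X c (TuTd X c n).2
      (tu, nextTd X c tu)

def Tu (X : ℝ → ℝ) (c : ℝ) (n : ℕ) : ℝ≥0∞ := (TuTd X c n).1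
def Td (X : ℝ → ℝ) (c : ℝ) (n : ℕ) : ℝ≥0∞ := (TuTd X c n).2

open Classical in
/-- The finite variation approximation `X^c` from the paper's construction. -/
def Xc (X : ℝ → ℝ) (c : ℝ) (s : ℝ) : ℝ :=
  if ENNReal.ofReal s < Tu X c 0 then X 0
  else if h : ∃ k, Tu X c k ≤ ENNReal.ofReal s ∧ ENNReal.ofReal s < Td X c k then
    supOn X (Tu X c (Nat.find h)).toReal s - c
  else if h' : ∃ k, Td X c k ≤ ENNReal.ofReal s ∧ ENNReal.ofReal s < Tu X c (k + 1) then
    infOn X (Td X c (Nat.find h')).toReal s + c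
  else 0

/-- Truncated variation at level `c` on `[0, T]`. -/
def TVtrunc (f : ℝ → ℝ) (c T : ℝ) : ℝ≥0∞ :=
  ⨆ (n : ℕ) (t : ℕ → ℝ) (_ : Monotone t) (_ : ∀ i, t i ∈ Icc (0 : ℝ) T),
    ∑ i ∈ Finset.range n, ENNReal.ofReal (|f (t (i + 1)) - f (t i)| - c)

/-- Upward truncated variation at level `c` on `[0, T]`. -/
def UTVtrunc (f : ℝ → ℝ) (c T : ℝ) : ℝ≥0∞ :=
  ⨆ (n : ℕ) (t : ℕ → ℝ) (_ : Monotone t) (_ : ∀ i, t i ∈ Icc (0 : ℝ) T),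
    ∑ i ∈ Finset.range n, ENNReal.ofReal (f (t (i + 1)) - f (t i) - c)

/-- Downward truncated variation at level `c` on `[0, T]`. -/
def DTVtrunc (f : ℝ → ℝ) (c T : ℝ) : ℝ≥0∞ :=
  ⨆ (n : ℕ) (t : ℕ → ℝ) (_ : Monotone t) (_ : ∀ i, t i ∈ Icc (0 : ℝ) T),
    ∑ i ∈ Finset.range n, ENNReal.ofReal (f (t i) - f (t (i + 1)) - c)

/-- Left-endpoint Riemann–Stieltjes sum of `f` against `g` over the dyadic
partition of `[0, t]` with `2 ^ n` pieces. -/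
def RSsum (f g : ℝ → ℝ) (t : ℝ) (n : ℕ) : ℝ :=
  ∑ i ∈ Finset.range (2 ^ n),
    f (t * i / 2 ^ n) * (g (t * (i + 1) / 2 ^ n) - g (t * i / 2 ^ n))

/-- Pathwise Lebesgue–Stieltjes integral `∫_0^t f_- dg`, realized as the limit of
left-endpoint Riemann–Stieltjes sums along dyadic partitions. -/
def LSint (f g : ℝ → ℝ) (t : ℝ) : ℝ := limUnder atTop (fun n => RSsum f g t n)

/-- Discrete covariation sums along dyadic partitions. -/
def QVsum (f g : ℝ → ℝ) (t : ℝ) (n : ℕ) : ℝ :=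
  ∑ i ∈ Finset.range (2 ^ n),
    (f (t * (i + 1) / 2 ^ n) - f (t * i / 2 ^ n)) *
      (g (t * (i + 1) / 2 ^ n) - g (t * i / 2 ^ n))

/-- Sum of products of jumps `∑_{0 < s ≤ t} Δf Δg`. -/
def jumpSum (f g : ℝ → ℝ) (t : ℝ) : ℝ :=
  ∑' s : ℝ, Set.indicator (Ioc (0 : ℝ) t) (fun u => jumpAt f u * jumpAt g u) s

/-- A local martingale: there is a localizing sequence of stopping times. -/
def IsLocalMartingale {Ω : Type*} [m : MeasurableSpace Ω] (F : Filtration ℝ m)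
    (P : Measure Ω) (M : ℝ → Ω → ℝ) : Prop :=
  ∃ τ : ℕ → Ω → ℝ, (∀ n, IsStoppingTime F (fun ω => ((τ n ω : ℝ) : WithTop ℝ))) ∧
    (∀ ω, Tendsto (fun n => τ n ω) atTop atTop) ∧
    ∀ n, Martingale (stoppedProcess M (fun ω => ((τ n ω : ℝ) : WithTop ℝ))) F P

/-- A (càdlàg) semimartingale: adapted, càdlàg, and decomposable as a local
martingale plus an adapted càdlàg process of locally finite variation. -/
def IsSemimartingale {Ω : Type*} [m : MeasurableSpace Ω] (F : Filtration ℝ m)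
    (P : Measure Ω) (X : ℝ → Ω → ℝ) : Prop :=
  Adapted F X ∧ (∀ ω, Cadlag fun t => X t ω) ∧
  ∃ M A : ℝ → Ω → ℝ, (∀ t ω, X t ω = M t ω + A t ω) ∧
    IsLocalMartingale F P M ∧ Adapted F A ∧ (∀ ω, Cadlag fun t => A t ω) ∧
    (∀ ω, ∀ T > (0 : ℝ), eVariationOn (fun t => A t ω) (Icc 0 T) < ⊤)

/-- The filtration satisfies the usual hypotheses w.r.t. `P`:
right-continuity and completeness. -/
def UsualConditions {Ω : Type*} [m : MeasurableSpace Ω] (F : Filtration ℝ m)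
    (P : Measure Ω) : Prop :=
  (∀ t : ℝ, F t = ⨅ (s : ℝ) (_ : t < s), F s) ∧
  (∀ t : ℝ, ∀ s : Set Ω, P s = 0 → MeasurableSet[F t] s)

/-- Uniform convergence on compacts in probability, as `c ↓ 0`. -/
def UCP {Ω : Type*} [m : MeasurableSpace Ω] (P : Measure Ω)
    (Fc : ℝ → ℝ → Ω → ℝ) (G : ℝ → Ω → ℝ) : Prop :=
  ∀ T > (0 : ℝ), ∀ ε > (0 : ℝ),
    Tendsto (fun c => P {ω | ε ≤ ⨆ t : Icc (0 : ℝ) T, |Fc c t ω - G t ω|})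
      (nhdsWithin 0 (Ioi 0)) (nhds 0)

/-- Standard Brownian motion started at `0`. -/
def IsStandardBM {Ω : Type*} [m : MeasurableSpace Ω] (P : Measure Ω)
    (B : ℝ → Ω → ℝ) : Prop :=
  (∀ ω, B 0 ω = 0) ∧ (∀ ω, Continuous fun t => B t ω) ∧
  (∀ t, Measurable (B t)) ∧
  (∀ s t : ℝ, 0 ≤ s → s ≤ t →
    P.map (fun ω => B t ω - B s ω) = ProbabilityTheory.gaussianReal 0 ((t - s).toNNReal)) ∧
  (∀ n : ℕ, ∀ t : Fin (n + 1) → ℝ, Monotone t → (∀ i, 0 ≤ t i) →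
    ProbabilityTheory.iIndepFun
      (fun (i : Fin n) ω => B (t i.succ) ω - B (t i.castSucc) ω) P)

/-- Natural σ-algebra of the process `B` up to time `t`. -/
def naturalSigma {Ω : Type*} (B : ℝ → Ω → ℝ) (t : ℝ) : MeasurableSpace Ω :=
  ⨆ s ∈ Iic t, MeasurableSpace.comap (B s) inferInstance


section Aux

variable {X : ℝ → ℝ} {c : ℝ}

lemma Cadlag.bddAux (hX : Cadlag X) {K : Set ℝ} (hK : IsCompact K) :
    BddAbove (X '' K) ∧ BddBelow (X '' K) := by
  refine hK.induction_on (by simp) ?_ ?_ ?_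
  · intro s t hst ht
    exact ⟨ht.1.mono (image_mono hst), ht.2.mono (image_mono hst)⟩
  · intro s t hs ht
    rw [image_union]; exact ⟨hs.1.union ht.1, hs.2.union ht.2⟩
  · intro x _
    obtain ⟨L, hL⟩ := hX.2 x
    have h1 : X ⁻¹' (Metric.ball L 1 ∪ Metric.ball (X x) 1) ∈ 𝓝[Iio x] x :=
      hL (by exact mem_of_superset (Metric.ball_mem_nhds L one_pos) subset_union_left)
    have h2 : X ⁻¹' (Metric.ball L 1 ∪ Metric.ball (X x) 1) ∈ 𝓝[Ici x] x :=
      hX.1 x (by exact mem_of_superset (Metric.ball_mem_nhds (X x) one_pos) subset_union_right)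
    have h3 : X ⁻¹' (Metric.ball L 1 ∪ Metric.ball (X x) 1) ∈ 𝓝 x := by
      rw [← nhdsLT_sup_nhdsGE x]
      exact mem_sup.2 ⟨h1, h2⟩
    refine ⟨_, nhdsWithin_le_nhds h3, ?_, ?_⟩
    · refine ⟨max (L + 1) (X x + 1), ?_⟩
      rintro _ ⟨w, hw, rfl⟩
      rcases hw with hw | hw <;> rw [Metric.mem_ball, Real.dist_eq, abs_sub_lt_iff] at hw
      · exact le_max_of_le_left (by linarith [hw.1])
      · exact le_max_of_le_right (by linarith [hw.1])
    · refine ⟨min (L - 1) (X x - 1), ?_⟩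
      rintro _ ⟨w, hw, rfl⟩
      rcases hw with hw | hw <;> rw [Metric.mem_ball, Real.dist_eq, abs_sub_lt_iff] at hw
      · exact min_le_of_left_le (by linarith [hw.2])
      · exact min_le_of_right_le (by linarith [hw.2])

lemma Cadlag.bddA (hX : Cadlag X) (a b : ℝ) : BddAbove (X '' Icc a b) :=
  (hX.bddAux isCompact_Icc).1

lemma Cadlag.bddB (hX : Cadlag X) (a b : ℝ) : BddBelow (X '' Icc a b) :=
  (hX.bddAux isCompact_Icc).2

lemma le_supOn (hX : Cadlag X) {a b x : ℝ} (hx : x ∈ Icc a b) : X x ≤ supOn X a b :=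
  le_csSup (hX.bddA a b) (mem_image_of_mem _ hx)

lemma infOn_le (hX : Cadlag X) {a b x : ℝ} (hx : x ∈ Icc a b) : infOn X a b ≤ X x :=
  csInf_le (hX.bddB a b) (mem_image_of_mem _ hx)

lemma supOn_le {a b M : ℝ} (hab : a ≤ b) (h : ∀ x ∈ Icc a b, X x ≤ M) :
    supOn X a b ≤ M :=
  csSup_le (by exact ⟨X a, mem_image_of_mem _ ⟨le_refl a, hab⟩⟩)
    (by rintro _ ⟨x, hx, rfl⟩; exact h x hx)

lemma le_infOn {a b M : ℝ} (hab : a ≤ b) (h : ∀ x ∈ Icc a b, M ≤ X x) :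
    M ≤ infOn X a b :=
  le_csInf (by exact ⟨X a, mem_image_of_mem _ ⟨le_refl a, hab⟩⟩)
    (by rintro _ ⟨x, hx, rfl⟩; exact h x hx)

lemma supOn_mono (hX : Cadlag X) {a b b' : ℝ} (hab : a ≤ b) (hbb : b ≤ b') :
    supOn X a b ≤ supOn X a b' :=
  csSup_le_csSup (hX.bddA a b') ⟨X a, mem_image_of_mem _ ⟨le_refl a, hab⟩⟩
    (image_mono (Icc_subset_Icc_right hbb))

lemma infOn_anti (hX : Cadlag X) {a b b' : ℝ} (hab : a ≤ b) (hbb : b ≤ b') :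
    infOn X a b' ≤ infOn X a b :=
  csInf_le_csInf (hX.bddB a b') ⟨X a, mem_image_of_mem _ ⟨le_refl a, hab⟩⟩
    (image_mono (Icc_subset_Icc_right hbb))

lemma supOn_self (a : ℝ) : supOn X a a = X a := by
  rw [supOn, Icc_self, image_singleton, csSup_singleton]

lemma infOn_self (a : ℝ) : infOn X a a = X a := by
  rw [infOn, Icc_self, image_singleton, csInf_singleton]

/-- Right continuity of the running supremum. -/
lemma supOn_rc (hX : Cadlag X) {a w : ℝ} (haw : a ≤ w) {ε : ℝ} (hε : 0 < ε) :
    ∃ δ > 0, ∀ s, w ≤ s → s < w + δ → supOn X a s ≤ supOn X a w + ε := by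
  have h2 : {y | X y < X w + ε} ∈ 𝓝[Ici w] w :=
    hX.1 w (Iio_mem_nhds (by linarith))
  rw [mem_nhdsGE_iff_exists_Ico_subset] at h2
  obtain ⟨u, hu, hsub⟩ := h2
  refine ⟨u - w, by simpa using hu, fun s hws hsu => ?_⟩
  refine supOn_le (le_trans haw hws) fun x hx => ?_
  rcases le_or_gt x w with hxw | hxw
  · exact le_trans (le_supOn hX ⟨hx.1, hxw⟩) (by linarith)
  · have : X x < X w + ε := hsub ⟨hxw.le, by linarith [hx.2]⟩
    have hXw : X w ≤ supOn X a w := le_supOn hX ⟨haw, le_refl w⟩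
    linarith

/-- Right continuity of the running infimum. -/
lemma infOn_rc (hX : Cadlag X) {a w : ℝ} (haw : a ≤ w) {ε : ℝ} (hε : 0 < ε) :
    ∃ δ > 0, ∀ s, w ≤ s → s < w + δ → infOn X a w - ε ≤ infOn X a s := by
  have h2 : {y | X w - ε < X y} ∈ 𝓝[Ici w] w :=
    hX.1 w (Ioi_mem_nhds (by linarith))
  rw [mem_nhdsGE_iff_exists_Ico_subset] at h2
  obtain ⟨u, hu, hsub⟩ := h2
  refine ⟨u - w, by simpa using hu, fun s hws hsu => ?_⟩
  refine le_infOn (le_trans haw hws) fun x hx => ?_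
  rcases le_or_gt x w with hxw | hxw
  · exact le_trans (by linarith) (infOn_le hX ⟨hx.1, hxw⟩)
  · have : X w - ε < X x := hsub ⟨hxw.le, by linarith [hx.2]⟩
    have hXw : infOn X a w ≤ X w := infOn_le hX ⟨haw, le_refl w⟩
    linarith

end Aux
section Aux2

variable {X : ℝ → ℝ}

/-- If the running supremum increases on `(t1, t2]`, there is a point `τ ∈ (t1, t2]`
where `X` attains its running supremum. -/
lemma exists_eq_supOn (hX : Cadlag X) {a t1 t2 : ℝ} (hat : a ≤ t1) (h12 : t1 < t2)
    (hlt : supOn X a t1 < supOn X a t2) :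
    ∃ τ, t1 < τ ∧ τ ≤ t2 ∧ X τ = supOn X a τ := by
  -- move slightly right of t1
  obtain ⟨δ, hδ, hδ2⟩ := supOn_rc hX hat (by linarith : (0:ℝ) < (supOn X a t2 - supOn X a t1)/2)
  set t1' : ℝ := min (t1 + δ/2) ((t1 + t2)/2) with ht1'def
  have ht1'gt : t1 < t1' := by
    apply lt_min <;> linarith
  have ht1'lt : t1' < t2 := min_lt_of_right_lt (by linarith)
  have hat' : a ≤ t1' := le_trans hat ht1'gt.le
  have hsup1' : supOn X a t1' < supOn X a t2 := by
    have := hδ2 t1' ht1'gt.le (lt_of_le_of_lt (min_le_left _ _) (by linarith))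
    linarith
  -- the set of points after t1' exceeding supOn X a t1'
  set S : Set ℝ := {w | t1' < w ∧ w ≤ t2 ∧ supOn X a t1' < X w} with hSdef
  have hSne : S.Nonempty := by
    obtain ⟨y, hy, hy2⟩ := exists_lt_of_lt_csSup
      (⟨X a, mem_image_of_mem _ ⟨le_refl a, by linarith⟩⟩ : (X '' Icc a t2).Nonempty) hsup1'
    obtain ⟨w, hw, rfl⟩ := hy
    refine ⟨w, ?_, hw.2, hy2⟩
    by_contra hw1
    push_neg at hw1
    exact absurd (le_supOn hX ⟨hw.1, hw1⟩) (not_le.2 hy2)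
  have hSbdd : BddBelow S := ⟨t1', fun w hw => hw.1.le⟩
  set τ : ℝ := sInf S with hτdef
  obtain ⟨w0, hw0⟩ := id hSne
  have hτle : τ ≤ t2 := le_trans (csInf_le hSbdd hw0) hw0.2.1
  have hτge : t1' ≤ τ := le_csInf hSne fun w hw => hw.1.le
  have haτ : a ≤ τ := le_trans hat' hτge
  -- X τ ≥ supOn X a t1'
  have hXτ : supOn X a t1' ≤ X τ := by
    refine le_of_forall_pos_le_add fun ε hε => ?_
    have h2 : {y | X y < X τ + ε} ∈ 𝓝[Ici τ] τ := hX.1 τ (Iio_mem_nhds (by linarith))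
    rw [mem_nhdsGE_iff_exists_Ico_subset] at h2
    obtain ⟨u, hu, hsub⟩ := h2
    obtain ⟨w, hwS, hwu⟩ := exists_lt_of_csInf_lt hSne (lt_of_lt_of_le hu.out (le_refl u) : τ < u)
    have hτw : τ ≤ w := csInf_le hSbdd hwS
    have hmem := hsub ⟨hτw, hwu⟩
    simp only [mem_setOf_eq] at hmem
    have h22 := hwS.2.2
    linarith
  refine ⟨τ, lt_of_lt_of_le ht1'gt hτge, hτle, le_antisymm (le_supOn hX ⟨haτ, le_refl τ⟩) ?_⟩
  refine supOn_le haτ fun x hx => ?_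
  rcases le_or_gt x t1' with hx1 | hx1
  · exact le_trans (le_supOn hX ⟨hx.1, hx1⟩) hXτ
  · rcases eq_or_lt_of_le hx.2 with rfl | hxτ
    · exact le_refl _
    · have hxS : x ∉ S := fun hmem => absurd (csInf_le hSbdd hmem) (not_le.2 hxτ)
      have : ¬ supOn X a t1' < X x := fun hc => hxS ⟨hx1, le_trans hx.2 hτle, hc⟩
      linarith [hXτ, not_lt.1 this]

/-- If the running infimum decreases on `(t1, t2]`, there is a point `τ ∈ (t1, t2]`
where `X` attains its running infimum. -/
lemma exists_eq_infOn (hX : Cadlag X) {a t1 t2 : ℝ} (hat : a ≤ t1) (h12 : t1 < t2)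
    (hlt : infOn X a t2 < infOn X a t1) :
    ∃ τ, t1 < τ ∧ τ ≤ t2 ∧ X τ = infOn X a τ := by
  obtain ⟨δ, hδ, hδ2⟩ := infOn_rc hX hat (by linarith : (0:ℝ) < (infOn X a t1 - infOn X a t2)/2)
  set t1' : ℝ := min (t1 + δ/2) ((t1 + t2)/2) with ht1'def
  have ht1'gt : t1 < t1' := by
    apply lt_min <;> linarith
  have ht1'lt : t1' < t2 := min_lt_of_right_lt (by linarith)
  have hat' : a ≤ t1' := le_trans hat ht1'gt.le
  have hinf1' : infOn X a t2 < infOn X a t1' := by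
    have := hδ2 t1' ht1'gt.le (lt_of_le_of_lt (min_le_left _ _) (by linarith))
    linarith
  set S : Set ℝ := {w | t1' < w ∧ w ≤ t2 ∧ X w < infOn X a t1'} with hSdef
  have hSne : S.Nonempty := by
    obtain ⟨y, hy, hy2⟩ := exists_lt_of_csInf_lt
      (⟨X a, mem_image_of_mem _ ⟨le_refl a, by linarith⟩⟩ : (X '' Icc a t2).Nonempty) hinf1'
    obtain ⟨w, hw, rfl⟩ := hy
    refine ⟨w, ?_, hw.2, hy2⟩
    by_contra hw1
    push_neg at hw1
    exact absurd (infOn_le hX ⟨hw.1, hw1⟩) (not_le.2 hy2)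
  have hSbdd : BddBelow S := ⟨t1', fun w hw => hw.1.le⟩
  set τ : ℝ := sInf S with hτdef
  obtain ⟨w0, hw0⟩ := id hSne
  have hτle : τ ≤ t2 := le_trans (csInf_le hSbdd hw0) hw0.2.1
  have hτge : t1' ≤ τ := le_csInf hSne fun w hw => hw.1.le
  have haτ : a ≤ τ := le_trans hat' hτge
  have hXτ : X τ ≤ infOn X a t1' := by
    rw [← sub_nonpos]
    refine le_of_forall_pos_le_add fun ε hε => ?_
    have h2 : {y | X τ - ε < X y} ∈ 𝓝[Ici τ] τ := hX.1 τ (Ioi_mem_nhds (by linarith))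
    rw [mem_nhdsGE_iff_exists_Ico_subset] at h2
    obtain ⟨u, hu, hsub⟩ := h2
    obtain ⟨w, hwS, hwu⟩ := exists_lt_of_csInf_lt hSne (hu.out : τ < u)
    have hτw : τ ≤ w := csInf_le hSbdd hwS
    have hmem := hsub ⟨hτw, hwu⟩
    simp only [mem_setOf_eq] at hmem
    have h22 := hwS.2.2
    linarith
  refine ⟨τ, lt_of_lt_of_le ht1'gt hτge, hτle, le_antisymm ?_ (infOn_le hX ⟨haτ, le_refl τ⟩)⟩
  refine le_infOn haτ fun x hx => ?_
  rcases le_or_gt x t1' with hx1 | hx1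
  · exact le_trans hXτ (infOn_le hX ⟨hx.1, hx1⟩)
  · rcases eq_or_lt_of_le hx.2 with rfl | hxτ
    · exact le_refl _
    · have hxS : x ∉ S := fun hmem => absurd (csInf_le hSbdd hmem) (not_le.2 hxτ)
      have : ¬ X x < infOn X a t1' := fun hc => hxS ⟨hx1, le_trans hx.2 hτle, hc⟩
      linarith [hXτ, not_lt.1 this]

end Aux2
section Aux3

variable {X : ℝ → ℝ} {c : ℝ}

lemma td_def (X : ℝ → ℝ) (c : ℝ) (k : ℕ) : Td X c k = nextTd X c (Tu X c k) := by
  cases k <;> rfl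

lemma tu_zero_def (X : ℝ → ℝ) (c : ℝ) : Tu X c 0 = TuZero X c := rfl

lemma tu_succ_def (X : ℝ → ℝ) (c : ℝ) (k : ℕ) : Tu X c (k + 1) = nextTu X c (Td X c k) := rfl

lemma le_nextTd (X : ℝ → ℝ) (c : ℝ) (a : ℝ≥0∞) : a ≤ nextTd X c a :=
  le_sInf fun u hu => by obtain ⟨s, _, ha, rfl, _⟩ := hu; exact ha

lemma le_nextTu (X : ℝ → ℝ) (c : ℝ) (a : ℝ≥0∞) : a ≤ nextTu X c a :=
  le_sInf fun u hu => by obtain ⟨s, _, ha, rfl, _⟩ := hu; exact ha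

lemma tu_le_td (X : ℝ → ℝ) (c : ℝ) (k : ℕ) : Tu X c k ≤ Td X c k := by
  rw [td_def]; exact le_nextTd X c _

lemma td_le_tu (X : ℝ → ℝ) (c : ℝ) (k : ℕ) : Td X c k ≤ Tu X c (k + 1) := by
  rw [tu_succ_def]; exact le_nextTu X c _

lemma tu_mono (X : ℝ → ℝ) (c : ℝ) : Monotone (Tu X c) :=
  monotone_nat_of_le_succ fun k => (tu_le_td X c k).trans (td_le_tu X c k)

lemma td_mono (X : ℝ → ℝ) (c : ℝ) : Monotone (Td X c) :=
  monotone_nat_of_le_succ fun k => (td_le_tu X c k).trans (tu_le_td X c (k + 1))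

lemma td_le_tu_of_lt (X : ℝ → ℝ) (c : ℝ) {i j : ℕ} (h : i < j) : Td X c i ≤ Tu X c j :=
  (td_le_tu X c i).trans (tu_mono X c h)

lemma sup_sub_le_of_lt_nextTd {a : ℝ≥0∞} {s : ℝ} (h0 : 0 ≤ s) (ha : a ≤ ENNReal.ofReal s)
    (hlt : ENNReal.ofReal s < nextTd X c a) : supOn X a.toReal s - X s ≤ 2 * c := by
  by_contra h
  push_neg at h
  refine absurd (sInf_le ?_) (not_le.2 hlt)
  exact ⟨s, h0, ha, rfl, h⟩

lemma sub_inf_le_of_lt_nextTu {a : ℝ≥0∞} {s : ℝ} (h0 : 0 ≤ s) (ha : a ≤ ENNReal.ofReal s)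
    (hlt : ENNReal.ofReal s < nextTu X c a) : X s - infOn X a.toReal s ≤ 2 * c := by
  by_contra h
  push_neg at h
  refine absurd (sInf_le ?_) (not_le.2 hlt)
  exact ⟨s, h0, ha, rfl, h⟩

lemma of_lt_TuZero {s : ℝ} (h0 : 0 ≤ s) (hlt : ENNReal.ofReal s < TuZero X c) :
    supOn X 0 s - X 0 ≤ c := by
  by_contra h
  push_neg at h
  refine absurd (sInf_le ?_) (not_le.2 hlt)
  exact ⟨s, h0, rfl, h⟩

lemma of_lt_TdIni {s : ℝ} (h0 : 0 ≤ s) (hlt : ENNReal.ofReal s < TdIni X c) :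
    X 0 - infOn X 0 s ≤ c := by
  by_contra h
  push_neg at h
  refine absurd (sInf_le ?_) (not_le.2 hlt)
  exact ⟨s, h0, rfl, h⟩

lemma exists_near_nextTd {a b : ℝ≥0∞} (h : nextTd X c a < b) :
    ∃ s : ℝ, 0 ≤ s ∧ a ≤ ENNReal.ofReal s ∧ nextTd X c a ≤ ENNReal.ofReal s ∧
      ENNReal.ofReal s < b ∧ supOn X a.toReal s - X s > 2 * c := by
  obtain ⟨u, hu, hub⟩ := sInf_lt_iff.1 h
  obtain ⟨s, h0, ha, rfl, hgt⟩ := hu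
  exact ⟨s, h0, ha, sInf_le ⟨s, h0, ha, rfl, hgt⟩, hub, hgt⟩

lemma exists_near_nextTu {a b : ℝ≥0∞} (h : nextTu X c a < b) :
    ∃ s : ℝ, 0 ≤ s ∧ a ≤ ENNReal.ofReal s ∧ nextTu X c a ≤ ENNReal.ofReal s ∧
      ENNReal.ofReal s < b ∧ X s - infOn X a.toReal s > 2 * c := by
  obtain ⟨u, hu, hub⟩ := sInf_lt_iff.1 h
  obtain ⟨s, h0, ha, rfl, hgt⟩ := hu
  exact ⟨s, h0, ha, sInf_le ⟨s, h0, ha, rfl, hgt⟩, hub, hgt⟩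

lemma exists_near_TuZero {b : ℝ≥0∞} (h : TuZero X c < b) :
    ∃ s : ℝ, 0 ≤ s ∧ TuZero X c ≤ ENNReal.ofReal s ∧ ENNReal.ofReal s < b ∧
      supOn X 0 s - X 0 > c := by
  obtain ⟨u, hu, hub⟩ := sInf_lt_iff.1 h
  obtain ⟨s, h0, rfl, hgt⟩ := hu
  exact ⟨s, h0, sInf_le ⟨s, h0, rfl, hgt⟩, hub, hgt⟩

lemma lt_add_of_ofReal_lt {a : ℝ≥0∞} {s η : ℝ} (ha : a ≠ ⊤) (h0 : 0 ≤ s) (hη : 0 ≤ η)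
    (h : ENNReal.ofReal s < a + ENNReal.ofReal η) : s < a.toReal + η := by
  rw [← ENNReal.ofReal_toReal ha, ← ENNReal.ofReal_add ENNReal.toReal_nonneg hη] at h
  exact (ENNReal.ofReal_lt_ofReal_iff_of_nonneg h0).1 h

lemma self_lt_add_ofReal {a : ℝ≥0∞} {η : ℝ} (ha : a ≠ ⊤) (hη : 0 < η) :
    a < a + ENNReal.ofReal η :=
  ENNReal.lt_add_right ha (ENNReal.ofReal_pos.2 hη).ne'

/-- `nextTd` strictly exceeds its (finite) base time. -/
lemma lt_nextTd (hX : Cadlag X) (hc : 0 < c) {a : ℝ≥0∞} (ha : a ≠ ⊤) :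
    a < nextTd X c a := by
  rcases eq_or_lt_of_le (le_nextTd X c a) with heq | hlt
  · exfalso
    set w := a.toReal with hw
    obtain ⟨δ1, hδ1, hS⟩ := supOn_rc hX (le_refl w) (half_pos hc)
    have h2 : {y | X w - c / 2 < X y} ∈ 𝓝[Ici w] w := hX.1 w (Ioi_mem_nhds (by linarith))
    rw [mem_nhdsGE_iff_exists_Ico_subset] at h2
    obtain ⟨u, hu, hsub⟩ := h2
    have huw : w < u := hu.out
    set η := min δ1 (u - w) with hη
    have hηpos : 0 < η := lt_min hδ1 (by linarith)
    have hlt' : nextTd X c a < a + ENNReal.ofReal η := by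
      rw [← heq]; exact self_lt_add_ofReal ha hηpos
    obtain ⟨s, h0, has, -, hsb, hgt⟩ := exists_near_nextTd hlt'
    have hws : w ≤ s := ENNReal.toReal_le_of_le_ofReal h0 has
    have hsu : s < w + η := lt_add_of_ofReal_lt ha h0 hηpos.le hsb
    have hm1 : η ≤ δ1 := min_le_left _ _
    have hm2 : η ≤ u - w := min_le_right _ _
    have hb1 : supOn X w s ≤ supOn X w w + c / 2 := hS s hws (by linarith)
    rw [supOn_self] at hb1
    have hb2 : X w - c / 2 < X s := hsub (Set.mem_Ico.mpr ⟨hws, by linarith⟩)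
    linarith
  · exact hlt

/-- `nextTu` strictly exceeds its (finite) base time. -/
lemma lt_nextTu (hX : Cadlag X) (hc : 0 < c) {a : ℝ≥0∞} (ha : a ≠ ⊤) :
    a < nextTu X c a := by
  rcases eq_or_lt_of_le (le_nextTu X c a) with heq | hlt
  · exfalso
    set w := a.toReal with hw
    obtain ⟨δ1, hδ1, hS⟩ := infOn_rc hX (le_refl w) (half_pos hc)
    have h2 : {y | X y < X w + c / 2} ∈ 𝓝[Ici w] w := hX.1 w (Iio_mem_nhds (by linarith))
    rw [mem_nhdsGE_iff_exists_Ico_subset] at h2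
    obtain ⟨u, hu, hsub⟩ := h2
    have huw : w < u := hu.out
    set η := min δ1 (u - w) with hη
    have hηpos : 0 < η := lt_min hδ1 (by linarith)
    have hlt' : nextTu X c a < a + ENNReal.ofReal η := by
      rw [← heq]; exact self_lt_add_ofReal ha hηpos
    obtain ⟨s, h0, has, -, hsb, hgt⟩ := exists_near_nextTu hlt'
    have hws : w ≤ s := ENNReal.toReal_le_of_le_ofReal h0 has
    have hsu : s < w + η := lt_add_of_ofReal_lt ha h0 hηpos.le hsb
    have hm1 : η ≤ δ1 := min_le_left _ _
    have hm2 : η ≤ u - w := min_le_right _ _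
    have hb1 : infOn X w w - c / 2 ≤ infOn X w s := hS s hws (by linarith)
    rw [infOn_self] at hb1
    have hb2 : X s < X w + c / 2 := hsub (Set.mem_Ico.mpr ⟨hws, by linarith⟩)
    linarith
  · exact hlt

lemma tu_lt_td (hX : Cadlag X) (hc : 0 < c) {k : ℕ} (h : Tu X c k ≠ ⊤) :
    Tu X c k < Td X c k := by
  rw [td_def]; exact lt_nextTd hX hc h

lemma td_lt_tu (hX : Cadlag X) (hc : 0 < c) {k : ℕ} (h : Td X c k ≠ ⊤) :
    Td X c k < Tu X c (k + 1) := by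
  rw [tu_succ_def]; exact lt_nextTu hX hc h

/-- At a (finite) `nextTd` time, `X` sits at least `2c` below the running supremum. -/
lemma X_at_nextTd (hX : Cadlag X) (hc : 0 < c) {a : ℝ≥0∞} (ha : a ≠ ⊤)
    (hfin : nextTd X c a ≠ ⊤) :
    X (nextTd X c a).toReal + 2 * c ≤ supOn X a.toReal (nextTd X c a).toReal := by
  set d := (nextTd X c a).toReal with hd
  have had : a.toReal ≤ d := ENNReal.toReal_mono hfin (le_nextTd X c a)
  refine le_of_forall_pos_le_add fun ε hε => ?_
  obtain ⟨δ1, hδ1, hS⟩ := supOn_rc hX had (half_pos hε)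
  have h2 : {y | X d - ε / 2 < X y} ∈ 𝓝[Ici d] d := hX.1 d (Ioi_mem_nhds (by linarith))
  rw [mem_nhdsGE_iff_exists_Ico_subset] at h2
  obtain ⟨u, hu, hsub⟩ := h2
  have hud : d < u := hu.out
  set η := min δ1 (u - d) with hη
  have hηpos : 0 < η := lt_min hδ1 (by linarith)
  obtain ⟨s, h0, has, hds, hsb, hgt⟩ := exists_near_nextTd (self_lt_add_ofReal hfin hηpos)
  have hws : d ≤ s := ENNReal.toReal_le_of_le_ofReal h0 hds
  have hsu : s < d + η := lt_add_of_ofReal_lt hfin h0 hηpos.le hsb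
  have hm1 : η ≤ δ1 := min_le_left _ _
  have hm2 : η ≤ u - d := min_le_right _ _
  have hb1 : supOn X a.toReal s ≤ supOn X a.toReal d + ε / 2 := hS s hws (by linarith)
  have hb2 : X d - ε / 2 < X s := hsub (Set.mem_Ico.mpr ⟨hws, by linarith⟩)
  linarith

/-- At a (finite) `nextTu` time, `X` sits at least `2c` above the running infimum. -/
lemma X_at_nextTu (hX : Cadlag X) (hc : 0 < c) {a : ℝ≥0∞} (ha : a ≠ ⊤)
    (hfin : nextTu X c a ≠ ⊤) :
    infOn X a.toReal (nextTu X c a).toReal + 2 * c ≤ X (nextTu X c a).toReal := by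
  set d := (nextTu X c a).toReal with hd
  have had : a.toReal ≤ d := ENNReal.toReal_mono hfin (le_nextTu X c a)
  have key : ∀ ε > (0:ℝ), infOn X a.toReal d + 2 * c ≤ X d + ε := by
    intro ε hε
    obtain ⟨δ1, hδ1, hS⟩ := infOn_rc hX had (half_pos hε)
    have h2 : {y | X y < X d + ε / 2} ∈ 𝓝[Ici d] d := hX.1 d (Iio_mem_nhds (by linarith))
    rw [mem_nhdsGE_iff_exists_Ico_subset] at h2
    obtain ⟨u, hu, hsub⟩ := h2
    have hud : d < u := hu.out
    set η := min δ1 (u - d) with hη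
    have hηpos : 0 < η := lt_min hδ1 (by linarith)
    obtain ⟨s, h0, has, hds, hsb, hgt⟩ := exists_near_nextTu (self_lt_add_ofReal hfin hηpos)
    have hws : d ≤ s := ENNReal.toReal_le_of_le_ofReal h0 hds
    have hsu : s < d + η := lt_add_of_ofReal_lt hfin h0 hηpos.le hsb
    have hm1 : η ≤ δ1 := min_le_left _ _
    have hm2 : η ≤ u - d := min_le_right _ _
    have hb1 : infOn X a.toReal d - ε / 2 ≤ infOn X a.toReal s := hS s hws (by linarith)
    have hb2 : X s < X d + ε / 2 := hsub (Set.mem_Ico.mpr ⟨hws, by linarith⟩)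
    linarith
  exact le_of_forall_pos_le_add key

/-- At a (finite) `TuZero` time, `X` sits at least `c` above `X 0`. -/
lemma X_at_TuZero (hX : Cadlag X) (hc : 0 < c) (hfin : TuZero X c ≠ ⊤) :
    X 0 + c ≤ X (TuZero X c).toReal := by
  set t0 := (TuZero X c).toReal with ht0
  by_contra hcon
  push_neg at hcon
  set γ := (X 0 + c - X t0) / 2 with hγ
  have hγpos : 0 < γ := by rw [hγ]; linarith
  have h2 : {y | X y < X t0 + γ} ∈ 𝓝[Ici t0] t0 := hX.1 t0 (Iio_mem_nhds (by linarith))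
  rw [mem_nhdsGE_iff_exists_Ico_subset] at h2
  obtain ⟨u, hu, hsub⟩ := h2
  have hut : t0 < u := hu.out
  have hηpos : 0 < u - t0 := by linarith
  obtain ⟨s, h0, hts, hsb, hgt⟩ := exists_near_TuZero (self_lt_add_ofReal hfin hηpos)
  have hws : t0 ≤ s := ENNReal.toReal_le_of_le_ofReal h0 hts
  have hsu : s < t0 + (u - t0) := lt_add_of_ofReal_lt hfin h0 hηpos.le hsb
  have hkey : supOn X 0 s ≤ X 0 + c := by
    refine supOn_le h0 fun x hx => ?_
    rcases lt_or_ge x t0 with hxt | hxt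
    · have hx0 : ENNReal.ofReal x < TuZero X c := by
        rw [← ENNReal.ofReal_toReal hfin]
        exact (ENNReal.ofReal_lt_ofReal_iff_of_nonneg hx.1).2 hxt
      have h1 := of_lt_TuZero hx.1 hx0
      have h2 := le_supOn hX ⟨hx.1, le_refl x⟩
      linarith
    · have hx2 : X x < X t0 + γ := hsub (Set.mem_Ico.mpr ⟨hxt, by linarith [hx.2]⟩)
      have hγ2 : X t0 + γ ≤ X 0 + c := by rw [hγ]; linarith
      linarith
  linarith

end Aux3
section Aux4

variable {X : ℝ → ℝ} {c : ℝ}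

/-- The oscillation times tend to infinity: no accumulation for a càdlàg path. -/
lemma exists_lt_tu (hX : Cadlag X) (hc : 0 < c) (s : ℝ) :
    ∃ k, ENNReal.ofReal s < Tu X c k := by
  by_contra hcon
  push_neg at hcon
  set N := ENNReal.ofReal s with hN
  have hNfin : N ≠ ⊤ := ENNReal.ofReal_ne_top
  have htufin : ∀ k, Tu X c k ≠ ⊤ := fun k =>
    ((hcon k).trans_lt (ENNReal.ofReal_lt_top)).ne
  have htdle : ∀ k, Td X c k ≤ N := fun k => (td_le_tu X c k).trans (hcon (k + 1))
  have htdfin : ∀ k, Td X c k ≠ ⊤ := fun k => ((htdle k).trans_lt ENNReal.ofReal_lt_top).ne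
  set tR : ℕ → ℝ := fun k => (Tu X c k).toReal with htRdef
  set dR : ℕ → ℝ := fun k => (Td X c k).toReal with hdRdef
  have htRmono : Monotone tR := fun i j hij => ENNReal.toReal_mono (htufin j) (tu_mono X c hij)
  have htRledR : ∀ k, tR k ≤ dR k := fun k => ENNReal.toReal_mono (htdfin k) (tu_le_td X c k)
  have hdRle : ∀ k, dR k ≤ tR (k + 1) := fun k => ENNReal.toReal_mono (htufin _) (td_le_tu X c k)
  have hbdd : BddAbove (range tR) := by
    refine ⟨N.toReal, ?_⟩
    rintro _ ⟨k, rfl⟩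
    exact ENNReal.toReal_mono hNfin (hcon k)
  set tst := ⨆ k, tR k with htst
  have htle : ∀ k, tR k ≤ tst := fun k => le_ciSup hbdd k
  have hdle : ∀ k, dR k ≤ tst := fun k => (hdRle k).trans (htle (k + 1))
  obtain ⟨L, hL⟩ := hX.2 tst
  have h1 : X ⁻¹' Metric.ball L (c / 2) ∈ 𝓝[Iio tst] tst :=
    hL (Metric.ball_mem_nhds L (by linarith))
  rw [mem_nhdsLT_iff_exists_Ioo_subset] at h1
  obtain ⟨l, hl, hsubL⟩ := h1
  have h2 : X ⁻¹' Metric.ball (X tst) (c / 2) ∈ 𝓝[Ici tst] tst :=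
    hX.1 tst (Metric.ball_mem_nhds _ (by linarith))
  rw [mem_nhdsGE_iff_exists_Ico_subset] at h2
  obtain ⟨u, hu, hsubR⟩ := h2
  have hltst : l < tst := hl.out
  have htstu : tst < u := hu.out
  have hleft : ∀ y, l < y → y < tst → |X y - L| < c / 2 := fun y hy1 hy2 => by
    have := hsubL (Set.mem_Ioo.mpr ⟨hy1, hy2⟩)
    rwa [mem_preimage, Metric.mem_ball, Real.dist_eq] at this
  have hright : ∀ y, tst ≤ y → y < u → |X y - X tst| < c / 2 := fun y hy1 hy2 => by
    have := hsubR (Set.mem_Ico.mpr ⟨hy1, hy2⟩)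
    rwa [mem_preimage, Metric.mem_ball, Real.dist_eq] at this
  -- choose K
  obtain ⟨K1, hK1⟩ : ∃ k, l < tR k := by
    rw [htst] at hltst
    exact (lt_ciSup_iff hbdd).1 hltst
  obtain ⟨K2, hK2⟩ : ∃ n : ℕ, (1 : ℝ) / (n + 1) < u - tst := exists_nat_one_div_lt (by linarith)
  set K := max K1 K2 with hK
  have hlK : l < tR K := lt_of_lt_of_le hK1 (htRmono (le_max_left _ _))
  have hεK : (1 : ℝ) / (K + 1) < u - tst := by
    refine lt_of_le_of_lt ?_ hK2
    apply one_div_le_one_div_of_le (by positivity)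
    have : (K2 : ℝ) ≤ K := Nat.cast_le.2 (le_max_right _ _)
    linarith
  set ε0 := (1 : ℝ) / (K + 1) with hε0
  have hε0pos : 0 < ε0 := by positivity
  -- the oscillation pair coming from Td K
  have hTdK : Td X c K = nextTd X c (Tu X c K) := td_def X c K
  obtain ⟨sK, hsK0, hsK1, hsK2, hsK3, hsK4⟩ :=
    exists_near_nextTd (X := X) (c := c) (a := Tu X c K)
      (b := nextTd X c (Tu X c K) + ENNReal.ofReal ε0)
      (self_lt_add_ofReal (hTdK ▸ htdfin K) hε0pos)
  have hsKlow : tR K ≤ sK := ENNReal.toReal_le_of_le_ofReal hsK0 hsK1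
  have hsKup : sK < dR K + ε0 := by
    have h := lt_add_of_ofReal_lt (hTdK ▸ htdfin K) hsK0 hε0pos.le hsK3
    rw [← hTdK] at h
    exact h
  have hsKu : sK < u := by
    have := hdle K
    linarith
  obtain ⟨y, hy, hygt⟩ := exists_lt_of_lt_csSup
    (⟨X (tR K), mem_image_of_mem _ ⟨le_refl _, hsKlow⟩⟩ : (X '' Icc (tR K) sK).Nonempty)
    (by linarith [hsK4] : X sK + 2 * c < supOn X (Tu X c K).toReal sK)
  obtain ⟨w, hw, rfl⟩ := hy
  have hwl : l < w := lt_of_lt_of_le hlK hw.1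
  have hwu : w < u := lt_of_le_of_lt hw.2 hsKu
  -- the oscillation pair coming from Tu (K+1)
  have hTuK : Tu X c (K + 1) = nextTu X c (Td X c K) := tu_succ_def X c K
  obtain ⟨sK', hsK0', hsK1', hsK2', hsK3', hsK4'⟩ :=
    exists_near_nextTu (X := X) (c := c) (a := Td X c K)
      (b := nextTu X c (Td X c K) + ENNReal.ofReal ε0)
      (self_lt_add_ofReal (hTuK ▸ htufin (K + 1)) hε0pos)
  have hsKlow' : dR K ≤ sK' := ENNReal.toReal_le_of_le_ofReal hsK0' hsK1'
  have hsKup' : sK' < tR (K + 1) + ε0 := by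
    have h := lt_add_of_ofReal_lt (hTuK ▸ htufin (K + 1)) hsK0' hε0pos.le hsK3'
    rw [← hTuK] at h
    exact h
  have hsKu' : sK' < u := by
    have := htle (K + 1)
    linarith
  obtain ⟨y', hy', hylt'⟩ := exists_lt_of_csInf_lt
    (⟨X (dR K), mem_image_of_mem _ ⟨le_refl _, hsKlow'⟩⟩ : (X '' Icc (dR K) sK').Nonempty)
    (by linarith [hsK4'] : infOn X (Td X c K).toReal sK' < X sK' - 2 * c)
  obtain ⟨v, hv, rfl⟩ := hy'
  have hvl : l < v := lt_of_lt_of_le hlK (le_trans (htRledR K) hv.1)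
  have hvu : v < u := lt_of_le_of_lt hv.2 hsKu'
  -- now derive the contradiction
  have hdown : L - X tst > c := by
    rcases lt_or_ge w tst with hwt | hwt
    · rcases lt_or_ge sK tst with hst | hst
      · have a1 := hleft w hwl hwt
        have a2 := hleft sK (lt_of_lt_of_le hwl hw.2) hst
        rw [abs_sub_lt_iff] at a1 a2
        linarith
      · have a1 := hleft w hwl hwt
        have a2 := hright sK hst hsKu
        rw [abs_sub_lt_iff] at a1 a2
        linarith
    · have a1 := hright w (le_trans hwt (le_refl w)) hwu
      have a2 := hright sK (le_trans hwt hw.2) hsKu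
      rw [abs_sub_lt_iff] at a1 a2
      linarith
  have hup : X tst - L > c := by
    rcases lt_or_ge v tst with hvt | hvt
    · rcases lt_or_ge sK' tst with hst | hst
      · have a1 := hleft v hvl hvt
        have a2 := hleft sK' (lt_of_lt_of_le hvl hv.2) hst
        rw [abs_sub_lt_iff] at a1 a2
        linarith
      · have a1 := hleft v hvl hvt
        have a2 := hright sK' hst hsKu'
        rw [abs_sub_lt_iff] at a1 a2
        linarith
    · have a1 := hright v hvt hvu
      have a2 := hright sK' (le_trans hvt hv.2) hsKu'
      rw [abs_sub_lt_iff] at a1 a2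
      linarith
  linarith

end Aux4
section Aux5

variable {X : ℝ → ℝ} {c : ℝ}

lemma regime (hX : Cadlag X) (hc : 0 < c) {s : ℝ} (h0 : 0 ≤ s) :
    ENNReal.ofReal s < Tu X c 0 ∨
    (∃ k, Tu X c k ≤ ENNReal.ofReal s ∧ ENNReal.ofReal s < Td X c k) ∨
    (∃ k, Td X c k ≤ ENNReal.ofReal s ∧ ENNReal.ofReal s < Tu X c (k + 1)) := by
  classical
  rcases lt_or_ge (ENNReal.ofReal s) (Tu X c 0) with h | h
  · exact Or.inl h
  right
  have hex : ∃ k, ENNReal.ofReal s < Tu X c k := exists_lt_tu hX hc s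
  have hk0 : Nat.find hex ≠ 0 := fun hz => absurd (hz ▸ Nat.find_spec hex) (not_lt.2 h)
  obtain ⟨k, hk1⟩ := Nat.exists_eq_succ_of_ne_zero hk0
  have hspec : ENNReal.ofReal s < Tu X c (k + 1) := by
    have h' := Nat.find_spec hex
    rwa [hk1] at h'
  have hmin : Tu X c k ≤ ENNReal.ofReal s :=
    not_lt.1 (Nat.find_min hex (show k < Nat.find hex by rw [hk1]; exact Nat.lt_succ_self k))
  rcases lt_or_ge (ENNReal.ofReal s) (Td X c k) with h2 | h2
  · exact Or.inl ⟨k, hmin, h2⟩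
  · exact Or.inr ⟨k, h2, hspec⟩

lemma xc_case0 {s : ℝ} (h : ENNReal.ofReal s < Tu X c 0) : Xc X c s = X 0 := by
  rw [Xc, if_pos h]

lemma xc_caseU (hX : Cadlag X) (hc : 0 < c) {s : ℝ} {k : ℕ}
    (h1 : Tu X c k ≤ ENNReal.ofReal s) (h2 : ENNReal.ofReal s < Td X c k) :
    Xc X c s = supOn X (Tu X c k).toReal s - c := by
  classical
  have hex : ∃ j, Tu X c j ≤ ENNReal.ofReal s ∧ ENNReal.ofReal s < Td X c j := ⟨k, h1, h2⟩
  have hno : ¬ ENNReal.ofReal s < Tu X c 0 :=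
    not_lt.2 ((tu_mono X c (Nat.zero_le k)).trans h1)
  have hfind : Nat.find hex = k := by
    rcases lt_trichotomy (Nat.find hex) k with h | h | h
    · exfalso
      obtain ⟨hj1, hj2⟩ := Nat.find_spec hex
      exact absurd ((td_le_tu_of_lt X c h).trans h1) (not_le.2 hj2)
    · exact h
    · exact absurd ⟨h1, h2⟩ (Nat.find_min hex h)
  rw [Xc, if_neg hno, dif_pos hex, hfind]

lemma xc_caseD (hX : Cadlag X) (hc : 0 < c) {s : ℝ} {k : ℕ}
    (h1 : Td X c k ≤ ENNReal.ofReal s) (h2 : ENNReal.ofReal s < Tu X c (k + 1)) :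
    Xc X c s = infOn X (Td X c k).toReal s + c := by
  classical
  have hno : ¬ ENNReal.ofReal s < Tu X c 0 :=
    not_lt.2 ((tu_mono X c (Nat.zero_le _)).trans ((tu_le_td X c k).trans h1))
  have hnoU : ¬ ∃ j, Tu X c j ≤ ENNReal.ofReal s ∧ ENNReal.ofReal s < Td X c j := by
    rintro ⟨j, hj1, hj2⟩
    rcases le_or_gt j k with hjk | hjk
    · exact absurd ((td_mono X c hjk).trans h1) (not_le.2 hj2)
    · exact absurd ((tu_mono X c hjk).trans hj1) (not_le.2 h2)
  have hex : ∃ j, Td X c j ≤ ENNReal.ofReal s ∧ ENNReal.ofReal s < Tu X c (j + 1) := ⟨k, h1, h2⟩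
  have hfind : Nat.find hex = k := by
    rcases lt_trichotomy (Nat.find hex) k with h | h | h
    · exfalso
      obtain ⟨hj1, hj2⟩ := Nat.find_spec hex
      have : Tu X c (Nat.find hex + 1) ≤ Td X c k :=
        (tu_mono X c (Nat.succ_le_of_lt h)).trans (tu_le_td X c k)
      exact absurd (this.trans h1) (not_le.2 hj2)
    · exact h
    · exact absurd ⟨h1, h2⟩ (Nat.find_min hex h)
  rw [Xc, if_neg hno, dif_neg hnoU, dif_pos hex, hfind]

lemma phi_at_tu (hX : Cadlag X) (hc : 0 < c) {k : ℕ} (hfin : Tu X c k ≠ ⊤) :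
    X (Tu X c k).toReal - Xc X c (Tu X c k).toReal = c := by
  have h1 : Tu X c k ≤ ENNReal.ofReal (Tu X c k).toReal := (ENNReal.ofReal_toReal hfin).ge
  have h2 : ENNReal.ofReal (Tu X c k).toReal < Td X c k := by
    rw [ENNReal.ofReal_toReal hfin]; exact tu_lt_td hX hc hfin
  rw [xc_caseU hX hc h1 h2, supOn_self]; ring

lemma phi_at_td (hX : Cadlag X) (hc : 0 < c) {k : ℕ} (hfin : Td X c k ≠ ⊤) :
    X (Td X c k).toReal - Xc X c (Td X c k).toReal = -c := by
  have h1 : Td X c k ≤ ENNReal.ofReal (Td X c k).toReal := (ENNReal.ofReal_toReal hfin).ge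
  have h2 : ENNReal.ofReal (Td X c k).toReal < Tu X c (k + 1) := by
    rw [ENNReal.ofReal_toReal hfin]; exact td_lt_tu hX hc hfin
  rw [xc_caseD hX hc h1 h2, infOn_self]; ring

lemma X_le_sup_at_td (hX : Cadlag X) (hc : 0 < c) {k : ℕ} (hfinU : Tu X c k ≠ ⊤)
    (hfinD : Td X c k ≠ ⊤) :
    X (Td X c k).toReal + 2 * c ≤ supOn X (Tu X c k).toReal (Td X c k).toReal := by
  have h := X_at_nextTd hX hc hfinU (by rw [← td_def]; exact hfinD)
  rwa [← td_def] at h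

lemma X_ge_inf_at_tu (hX : Cadlag X) (hc : 0 < c) {k : ℕ} (hfinD : Td X c k ≠ ⊤)
    (hfinU : Tu X c (k + 1) ≠ ⊤) :
    infOn X (Td X c k).toReal (Tu X c (k + 1)).toReal + 2 * c ≤ X (Tu X c (k + 1)).toReal := by
  have h := X_at_nextTu hX hc hfinD (by rw [← tu_succ_def]; exact hfinU)
  rwa [← tu_succ_def] at h

/-- Part 1 of the theorem: `X - Xc` stays in `[-c, c]`. -/
lemma part1 (hX : Cadlag X) (hc : 0 < c) (hud : Tu X c 0 ≤ TdIni X c)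
    {t : ℝ} (ht : 0 ≤ t) : X t - Xc X c t ∈ Icc (-c) c := by
  rcases regime hX hc ht with h | ⟨k, h1, h2⟩ | ⟨k, h1, h2⟩
  · rw [xc_case0 h]
    have hsup := of_lt_TuZero ht (h : ENNReal.ofReal t < TuZero X c)
    have hinf := of_lt_TdIni ht (lt_of_lt_of_le h hud)
    have hX1 : X t ≤ supOn X 0 t := le_supOn hX ⟨ht, le_refl t⟩
    have hX2 : infOn X 0 t ≤ X t := infOn_le hX ⟨ht, le_refl t⟩
    exact ⟨by linarith, by linarith⟩
  · have hfin : Tu X c k ≠ ⊤ := (h1.trans_lt ENNReal.ofReal_lt_top).ne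
    have hat : (Tu X c k).toReal ≤ t := ENNReal.toReal_le_of_le_ofReal ht h1
    rw [xc_caseU hX hc h1 h2]
    have hup : X t ≤ supOn X (Tu X c k).toReal t := le_supOn hX ⟨hat, le_refl t⟩
    have hdn : supOn X (Tu X c k).toReal t - X t ≤ 2 * c :=
      sup_sub_le_of_lt_nextTd ht h1 (by rw [← td_def]; exact h2)
    exact ⟨by linarith, by linarith⟩
  · have hfin : Td X c k ≠ ⊤ := (h1.trans_lt ENNReal.ofReal_lt_top).ne
    have hat : (Td X c k).toReal ≤ t := ENNReal.toReal_le_of_le_ofReal ht h1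
    rw [xc_caseD hX hc h1 h2]
    have hdn : infOn X (Td X c k).toReal t ≤ X t := infOn_le hX ⟨hat, le_refl t⟩
    have hup : X t - infOn X (Td X c k).toReal t ≤ 2 * c :=
      sub_inf_le_of_lt_nextTu ht h1 (by rw [← tu_succ_def]; exact h2)
    exact ⟨by linarith, by linarith⟩

end Aux5
section Aux6

variable {X : ℝ → ℝ} {c : ℝ}

/-- If `X - Xc` avoids `c` on `(a, b]`, then `Xc` is nonincreasing on `[a, b]`. -/
lemma xc_anti (hX : Cadlag X) (hc : 0 < c) {a b : ℝ} (ha : 0 ≤ a)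
    (hne : ∀ t ∈ Ioc a b, X t - Xc X c t ≠ c) :
    ∀ u v, a ≤ u → u ≤ v → v ≤ b → Xc X c v ≤ Xc X c u := by
  intro u v hau huv hvb
  rcases eq_or_lt_of_le huv with rfl | huv
  · exact le_refl _
  have hu0 : 0 ≤ u := ha.trans hau
  have hv0 : 0 ≤ v := hu0.trans huv.le
  have hTuNot : ∀ k, ENNReal.ofReal u < Tu X c k → ¬ Tu X c k ≤ ENNReal.ofReal v := by
    intro k hk1 hk2
    have hfin : Tu X c k ≠ ⊤ := (hk2.trans_lt ENNReal.ofReal_lt_top).ne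
    have hτv : (Tu X c k).toReal ≤ v := ENNReal.toReal_le_of_le_ofReal hv0 hk2
    have hτu : u < (Tu X c k).toReal := by
      by_contra hle
      push_neg at hle
      rw [← ENNReal.ofReal_toReal hfin] at hk1
      exact absurd (ENNReal.ofReal_le_ofReal hle) (not_le.2 hk1)
    exact hne _ ⟨lt_of_le_of_lt hau hτu, hτv.trans hvb⟩ (phi_at_tu hX hc hfin)
  rcases regime hX hc hv0 with h | ⟨k, h1, h2⟩ | ⟨k, h1, h2⟩
  · have hu : ENNReal.ofReal u < Tu X c 0 :=
      lt_of_le_of_lt (ENNReal.ofReal_le_ofReal huv.le) h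
    rw [xc_case0 h, xc_case0 hu]
  · -- v in regime U k
    have hku : Tu X c k ≤ ENNReal.ofReal u := by
      by_contra hlt
      push_neg at hlt
      exact hTuNot k hlt h1
    have hu2 : ENNReal.ofReal u < Td X c k :=
      lt_of_le_of_lt (ENNReal.ofReal_le_ofReal huv.le) h2
    rw [xc_caseU hX hc h1 h2, xc_caseU hX hc hku hu2]
    have htku : (Tu X c k).toReal ≤ u := ENNReal.toReal_le_of_le_ofReal hu0 hku
    rcases eq_or_lt_of_le (supOn_mono hX htku huv.le) with heq | hlt
    · rw [← heq]
    · exfalso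
      obtain ⟨τ, hτ1, hτ2, hτ3⟩ := exists_eq_supOn hX htku huv hlt
      have h1τ : Tu X c k ≤ ENNReal.ofReal τ := hku.trans (ENNReal.ofReal_le_ofReal hτ1.le)
      have h2τ : ENNReal.ofReal τ < Td X c k :=
        lt_of_le_of_lt (ENNReal.ofReal_le_ofReal hτ2) h2
      refine hne τ ⟨lt_of_le_of_lt hau hτ1, hτ2.trans hvb⟩ ?_
      rw [xc_caseU hX hc h1τ h2τ]
      linarith [hτ3]
  · -- v in regime D k
    have hfinD : Td X c k ≠ ⊤ := (h1.trans_lt ENNReal.ofReal_lt_top).ne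
    have hfinU : Tu X c k ≠ ⊤ := fun htop =>
      hfinD (top_le_iff.1 (htop ▸ tu_le_td X c k))
    have hdkv : (Td X c k).toReal ≤ v := ENNReal.toReal_le_of_le_ofReal hv0 h1
    have hku : Tu X c k ≤ ENNReal.ofReal u := by
      by_contra hlt
      push_neg at hlt
      exact hTuNot k hlt ((tu_le_td X c k).trans h1)
    have htku : (Tu X c k).toReal ≤ u := ENNReal.toReal_le_of_le_ofReal hu0 hku
    rcases le_or_gt (Td X c k) (ENNReal.ofReal u) with hdu | hdu
    · have hu2 : ENNReal.ofReal u < Tu X c (k + 1) :=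
        lt_of_le_of_lt (ENNReal.ofReal_le_ofReal huv.le) h2
      rw [xc_caseD hX hc h1 h2, xc_caseD hX hc hdu hu2]
      have := infOn_anti hX (ENNReal.toReal_le_of_le_ofReal hu0 hdu) huv.le
      linarith
    · have hXdk := X_le_sup_at_td hX hc hfinU hfinD
      have hudk : u < (Td X c k).toReal := by
        rw [← ENNReal.ofReal_toReal hfinD] at hdu
        by_contra hle
        push_neg at hle
        exact absurd (ENNReal.ofReal_le_ofReal hle) (not_le.2 hdu)
      have hsupconst : supOn X (Tu X c k).toReal (Td X c k).toReal
          ≤ supOn X (Tu X c k).toReal u := by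
        by_contra hlt
        push_neg at hlt
        obtain ⟨τ, hτ1, hτ2, hτ3⟩ := exists_eq_supOn hX htku hudk hlt
        rcases eq_or_lt_of_le hτ2 with heqτ | hτdk
        · rw [heqτ] at hτ3
          linarith [hXdk, hτ3]
        · have hτ0 : 0 ≤ τ := hu0.trans hτ1.le
          have h1τ : Tu X c k ≤ ENNReal.ofReal τ := hku.trans (ENNReal.ofReal_le_ofReal hτ1.le)
          have h2τ : ENNReal.ofReal τ < Td X c k := by
            rw [← ENNReal.ofReal_toReal hfinD]
            exact (ENNReal.ofReal_lt_ofReal_iff_of_nonneg hτ0).2 hτdk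
          refine hne τ ⟨lt_of_le_of_lt hau hτ1, (hτ2.trans hdkv).trans hvb⟩ ?_
          rw [xc_caseU hX hc h1τ h2τ]
          linarith [hτ3]
      rw [xc_caseD hX hc h1 h2, xc_caseU hX hc hku hdu]
      have hinf : infOn X (Td X c k).toReal v ≤ X (Td X c k).toReal :=
        infOn_le hX ⟨le_refl _, hdkv⟩
      linarith

/-- If `X - Xc` avoids `-c` on `(a, b]`, then `Xc` is nondecreasing on `[a, b]`. -/
lemma xc_mono (hX : Cadlag X) (hc : 0 < c) {a b : ℝ} (ha : 0 ≤ a)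
    (hne : ∀ t ∈ Ioc a b, X t - Xc X c t ≠ -c) :
    ∀ u v, a ≤ u → u ≤ v → v ≤ b → Xc X c u ≤ Xc X c v := by
  intro u v hau huv hvb
  rcases eq_or_lt_of_le huv with rfl | huv
  · exact le_refl _
  have hu0 : 0 ≤ u := ha.trans hau
  have hv0 : 0 ≤ v := hu0.trans huv.le
  have hTdNot : ∀ k, ENNReal.ofReal u < Td X c k → ¬ Td X c k ≤ ENNReal.ofReal v := by
    intro k hk1 hk2
    have hfin : Td X c k ≠ ⊤ := (hk2.trans_lt ENNReal.ofReal_lt_top).ne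
    have hτv : (Td X c k).toReal ≤ v := ENNReal.toReal_le_of_le_ofReal hv0 hk2
    have hτu : u < (Td X c k).toReal := by
      by_contra hle
      push_neg at hle
      rw [← ENNReal.ofReal_toReal hfin] at hk1
      exact absurd (ENNReal.ofReal_le_ofReal hle) (not_le.2 hk1)
    exact hne _ ⟨lt_of_le_of_lt hau hτu, hτv.trans hvb⟩ (phi_at_td hX hc hfin)
  rcases regime hX hc hv0 with h | ⟨k, h1, h2⟩ | ⟨k, h1, h2⟩
  · have hu : ENNReal.ofReal u < Tu X c 0 :=
      lt_of_le_of_lt (ENNReal.ofReal_le_ofReal huv.le) h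
    rw [xc_case0 h, xc_case0 hu]
  · -- v in regime U k
    have hfinU : Tu X c k ≠ ⊤ := (h1.trans_lt ENNReal.ofReal_lt_top).ne
    have htkv : (Tu X c k).toReal ≤ v := ENNReal.toReal_le_of_le_ofReal hv0 h1
    rcases le_or_gt (Tu X c k) (ENNReal.ofReal u) with hku | hku
    · have hu2 : ENNReal.ofReal u < Td X c k :=
        lt_of_le_of_lt (ENNReal.ofReal_le_ofReal huv.le) h2
      rw [xc_caseU hX hc h1 h2, xc_caseU hX hc hku hu2]
      have := supOn_mono hX (ENNReal.toReal_le_of_le_ofReal hu0 hku) huv.le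
      linarith
    · have huτ : u < (Tu X c k).toReal := by
        rw [← ENNReal.ofReal_toReal hfinU] at hku
        by_contra hle
        push_neg at hle
        exact absurd (ENNReal.ofReal_le_ofReal hle) (not_le.2 hku)
      have hv_ge : X (Tu X c k).toReal - c ≤ Xc X c v := by
        rw [xc_caseU hX hc h1 h2]
        have := le_supOn hX ⟨le_refl (Tu X c k).toReal, htkv⟩
        linarith
      refine le_trans ?_ hv_ge
      cases k with
      | zero =>
        rw [xc_case0 hku]
        have h0 := X_at_TuZero hX hc hfinU
        rw [show (TuZero X c) = Tu X c 0 from rfl] at h0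
        linarith
      | succ k =>
        have hfinD : Td X c k ≠ ⊤ := fun htop =>
          hfinU (top_le_iff.1 (htop ▸ td_le_tu X c k))
        rcases le_or_gt (Td X c k) (ENNReal.ofReal u) with hdu | hdu
        · have hu2 : ENNReal.ofReal u < Tu X c (k + 1) := hku
          rw [xc_caseD hX hc hdu hu2]
          have hdku : (Td X c k).toReal ≤ u := ENNReal.toReal_le_of_le_ofReal hu0 hdu
          have hkey := X_ge_inf_at_tu hX hc hfinD hfinU
          have hinfconst : infOn X (Td X c k).toReal u
              ≤ infOn X (Td X c k).toReal (Tu X c (k + 1)).toReal := by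
            by_contra hlt
            push_neg at hlt
            obtain ⟨τ, hτ1, hτ2, hτ3⟩ := exists_eq_infOn hX hdku huτ hlt
            rcases eq_or_lt_of_le hτ2 with heqτ | hτtk
            · rw [heqτ] at hτ3
              linarith [hkey]
            · have hτ0 : 0 ≤ τ := hu0.trans hτ1.le
              have h1τ : Td X c k ≤ ENNReal.ofReal τ :=
                hdu.trans (ENNReal.ofReal_le_ofReal hτ1.le)
              have h2τ : ENNReal.ofReal τ < Tu X c (k + 1) := by
                rw [← ENNReal.ofReal_toReal hfinU]
                exact (ENNReal.ofReal_lt_ofReal_iff_of_nonneg hτ0).2 hτtk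
              refine hne τ ⟨lt_of_le_of_lt hau hτ1, (hτ2.trans htkv).trans hvb⟩ ?_
              rw [xc_caseD hX hc h1τ h2τ]
              linarith [hτ3]
          linarith [hkey, hinfconst]
        · exfalso
          exact hTdNot k hdu ((td_le_tu X c k).trans h1)
  · -- v in regime D k
    have hdkv : (Td X c k).toReal ≤ v := ENNReal.toReal_le_of_le_ofReal hv0 h1
    have hdu : Td X c k ≤ ENNReal.ofReal u := by
      by_contra hlt
      push_neg at hlt
      exact hTdNot k hlt h1
    have hu2 : ENNReal.ofReal u < Tu X c (k + 1) :=
      lt_of_le_of_lt (ENNReal.ofReal_le_ofReal huv.le) h2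
    rw [xc_caseD hX hc h1 h2, xc_caseD hX hc hdu hu2]
    have hdku : (Td X c k).toReal ≤ u := ENNReal.toReal_le_of_le_ofReal hu0 hdu
    rcases eq_or_lt_of_le (infOn_anti hX hdku huv.le) with heq | hlt
    · rw [heq]
    · exfalso
      obtain ⟨τ, hτ1, hτ2, hτ3⟩ := exists_eq_infOn hX hdku huv hlt
      have h1τ : Td X c k ≤ ENNReal.ofReal τ := hdu.trans (ENNReal.ofReal_le_ofReal hτ1.le)
      have h2τ : ENNReal.ofReal τ < Tu X c (k + 1) :=
        lt_of_le_of_lt (ENNReal.ofReal_le_ofReal hτ2) h2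
      refine hne τ ⟨lt_of_le_of_lt hau hτ1, hτ2.trans hvb⟩ ?_
      rw [xc_caseD hX hc h1τ h2τ]
      linarith [hτ3]

end Aux6
section Aux7

lemma le_UTVtrunc (f : ℝ → ℝ) {T : ℝ} {n : ℕ} {t : ℕ → ℝ} (h1 : Monotone t)
    (h2 : ∀ i, t i ∈ Icc (0 : ℝ) T) :
    ∑ i ∈ Finset.range n, ENNReal.ofReal (f (t (i + 1)) - f (t i) - 0) ≤ UTVtrunc f 0 T :=
  le_iSup_of_le n (le_iSup_of_le t (le_iSup_of_le h1 (le_iSup_of_le h2 (le_refl _))))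

lemma UTVtrunc_le (f : ℝ → ℝ) {T : ℝ} {M : ℝ≥0∞}
    (h : ∀ n (t : ℕ → ℝ), Monotone t → (∀ i, t i ∈ Icc (0 : ℝ) T) →
      ∑ i ∈ Finset.range n, ENNReal.ofReal (f (t (i + 1)) - f (t i) - 0) ≤ M) :
    UTVtrunc f 0 T ≤ M :=
  iSup_le fun n => iSup_le fun t => iSup_le fun h1 => iSup_le fun h2 => h n t h1 h2

lemma le_DTVtrunc (f : ℝ → ℝ) {T : ℝ} {n : ℕ} {t : ℕ → ℝ} (h1 : Monotone t)
    (h2 : ∀ i, t i ∈ Icc (0 : ℝ) T) :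
    ∑ i ∈ Finset.range n, ENNReal.ofReal (f (t i) - f (t (i + 1)) - 0) ≤ DTVtrunc f 0 T :=
  le_iSup_of_le n (le_iSup_of_le t (le_iSup_of_le h1 (le_iSup_of_le h2 (le_refl _))))

lemma DTVtrunc_le (f : ℝ → ℝ) {T : ℝ} {M : ℝ≥0∞}
    (h : ∀ n (t : ℕ → ℝ), Monotone t → (∀ i, t i ∈ Icc (0 : ℝ) T) →
      ∑ i ∈ Finset.range n, ENNReal.ofReal (f (t i) - f (t (i + 1)) - 0) ≤ M) :
    DTVtrunc f 0 T ≤ M :=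
  iSup_le fun n => iSup_le fun t => iSup_le fun h1 => iSup_le fun h2 => h n t h1 h2

lemma UTVtrunc_const (f : ℝ → ℝ) {a b : ℝ} (ha : 0 ≤ a) (hab : a ≤ b)
    (hf : ∀ u v, a ≤ u → u ≤ v → v ≤ b → f v ≤ f u) :
    UTVtrunc f 0 b = UTVtrunc f 0 a := by
  refine le_antisymm ?_ ?_
  · refine UTVtrunc_le f fun n t hmono hmem => ?_
    have key : ∑ i ∈ Finset.range n, ENNReal.ofReal (f (t (i + 1)) - f (t i) - 0)
        ≤ ∑ i ∈ Finset.range n,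
            ENNReal.ofReal (f (min (t (i + 1)) a) - f (min (t i) a) - 0) := by
      refine Finset.sum_le_sum fun i _ => ?_
      rcases le_or_gt (t (i + 1)) a with h1 | h1
      · rw [min_eq_left h1, min_eq_left ((hmono (Nat.le_succ i)).trans h1)]
      · rcases le_or_gt (t i) a with h2 | h2
        · rw [min_eq_right h1.le, min_eq_left h2]
          apply ENNReal.ofReal_le_ofReal
          have := hf a (t (i + 1)) (le_refl a) h1.le (hmem (i + 1)).2
          linarith
        · have hle : f (t (i + 1)) ≤ f (t i) :=
            hf (t i) (t (i + 1)) h2.le (hmono (Nat.le_succ i)) (hmem (i + 1)).2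
          rw [ENNReal.ofReal_eq_zero.2 (by linarith)]
          exact zero_le
    exact le_trans key (le_UTVtrunc f (fun i j hij => min_le_min (hmono hij) (le_refl a))
      fun i => ⟨le_min (hmem i).1 ha, min_le_right _ _⟩)
  · refine UTVtrunc_le f fun n t hmono hmem => ?_
    exact le_UTVtrunc f hmono fun i => ⟨(hmem i).1, (hmem i).2.trans hab⟩

lemma DTVtrunc_const (f : ℝ → ℝ) {a b : ℝ} (ha : 0 ≤ a) (hab : a ≤ b)
    (hf : ∀ u v, a ≤ u → u ≤ v → v ≤ b → f u ≤ f v) :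
    DTVtrunc f 0 b = DTVtrunc f 0 a := by
  refine le_antisymm ?_ ?_
  · refine DTVtrunc_le f fun n t hmono hmem => ?_
    have key : ∑ i ∈ Finset.range n, ENNReal.ofReal (f (t i) - f (t (i + 1)) - 0)
        ≤ ∑ i ∈ Finset.range n,
            ENNReal.ofReal (f (min (t i) a) - f (min (t (i + 1)) a) - 0) := by
      refine Finset.sum_le_sum fun i _ => ?_
      rcases le_or_gt (t (i + 1)) a with h1 | h1
      · rw [min_eq_left h1, min_eq_left ((hmono (Nat.le_succ i)).trans h1)]
      · rcases le_or_gt (t i) a with h2 | h2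
        · rw [min_eq_right h1.le, min_eq_left h2]
          apply ENNReal.ofReal_le_ofReal
          have := hf a (t (i + 1)) (le_refl a) h1.le (hmem (i + 1)).2
          linarith
        · have hle : f (t i) ≤ f (t (i + 1)) :=
            hf (t i) (t (i + 1)) h2.le (hmono (Nat.le_succ i)) (hmem (i + 1)).2
          rw [ENNReal.ofReal_eq_zero.2 (by linarith)]
          exact zero_le
    exact le_trans key (le_DTVtrunc f (fun i j hij => min_le_min (hmono hij) (le_refl a))
      fun i => ⟨le_min (hmem i).1 ha, min_le_right _ _⟩)
  · refine DTVtrunc_le f fun n t hmono hmem => ?_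
    exact le_DTVtrunc f hmono fun i => ⟨(hmem i).1, (hmem i).2.trans hab⟩

end Aux7

/-- `(X − X^c, −X^c)` solves the Skorohod problem on `[−c, c]` for `X`:
`X − X^c` stays in `[−c, c]`, and the upward (resp. downward) variation of `X^c`, as a
function of time, only increases on intervals meeting `{X − X^c = c}`
(resp. `{X − X^c = −c}`). -/
theorem stmt_8 (X : ℝ → ℝ) (hX : Cadlag X) (c : ℝ) (hc : 0 < c)
    (hud : Tu X c 0 ≤ TdIni X c) :
    (∀ t : ℝ, 0 ≤ t → X t - Xc X c t ∈ Icc (-c) c) ∧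
    (∀ a b : ℝ, 0 ≤ a → a ≤ b →
      (∀ t ∈ Ioc a b, X t - Xc X c t ≠ c) →
      UTVtrunc (Xc X c) 0 b = UTVtrunc (Xc X c) 0 a) ∧
    (∀ a b : ℝ, 0 ≤ a → a ≤ b →
      (∀ t ∈ Ioc a b, X t - Xc X c t ≠ -c) →
      DTVtrunc (Xc X c) 0 b = DTVtrunc (Xc X c) 0 a) := by
  refine ⟨fun t ht => part1 hX hc hud ht, fun a b ha hab hne => ?_, fun a b ha hab hne => ?_⟩
  · exact UTVtrunc_const _ ha hab (xc_anti hX hc ha hne)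
  · exact DTVtrunc_const _ ha hab (xc_mono hX hc ha hne)

end
end

section
/- Let B be a standard Brownian motion, α(n) = β(n)^{1/2}, γ(n) = β(n)^{−1} with β as in the recursive definition, and B^{γ(n)} the finite-variation approximation of B satisfying |B − B^{γ(n)}| ≤ γ(n). Then the series Y = Σ_{n=2}^∞ α(n)(B − B^{γ(n)}) converges uniformly on [0,∞) to a bounded continuous process adapted to the natural filtration of B, with |α(n)(B − B^{γ(n)})| ≤ γ(n)^{1/2} for each n. -/
open Set Filter MeasureTheory
open scoped ENNReal NNReal Topology

noncomputable section

/-- the series `Y = Σ_{n≥2} α(n)(B − B^{γ(n)})` converges uniformly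
to a bounded continuous process adapted to the natural filtration of `B`, with
`|α(n)(B − B^{γ(n)})| ≤ γ(n)^{1/2}` for each `n ≥ 2`. -/
theorem stmt_15 {Ω : Type*} [m : MeasurableSpace Ω] (P : Measure Ω)
    [IsProbabilityMeasure P] (B : ℝ → Ω → ℝ) (hB : IsStandardBM P B)
    (β : ℕ → ℝ) (hβ1 : β 1 = 1)
    (hβ : ∀ n : ℕ, 2 ≤ n → β n = (n : ℝ) ^ 2 * β (n - 1) ^ 6)
    (α γ : ℕ → ℝ) (hα : ∀ n, α n = Real.sqrt (β n)) (hγ : ∀ n, γ n = (β n)⁻¹)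
    (Bc : ℝ → ℝ → Ω → ℝ)
    (happrox : ∀ c > (0 : ℝ), ∀ t ω, |B t ω - Bc c t ω| ≤ c)
    (hfv : ∀ c > (0 : ℝ), ∀ ω, ∀ T > (0 : ℝ),
      eVariationOn (fun t => Bc c t ω) (Icc 0 T) < ⊤)
    (hcont : ∀ c > (0 : ℝ), ∀ ω, Continuous fun t => Bc c t ω)
    (hadp : ∀ c > (0 : ℝ), ∀ t : ℝ, Measurable[naturalSigma B t] (Bc c t))
    (Y : ℝ → Ω → ℝ)
    (hYdef : ∀ t ω, Y t ω =
      ∑' n : ℕ, if 2 ≤ n then α n * (B t ω - Bc (γ n) t ω) else 0) :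
    (∀ n : ℕ, 2 ≤ n → ∀ t ω,
      |α n * (B t ω - Bc (γ n) t ω)| ≤ Real.sqrt (γ n)) ∧
    (∀ ω, TendstoUniformly
      (fun N t => ∑ n ∈ Finset.range N,
        if 2 ≤ n then α n * (B t ω - Bc (γ n) t ω) else 0)
      (fun t => Y t ω) atTop) ∧
    (∃ C : ℝ, ∀ t ω, |Y t ω| ≤ C) ∧
    (∀ ω, Continuous fun t => Y t ω) ∧
    (∀ t : ℝ, Measurable[naturalSigma B t] (Y t)) := by
  classical
  -- growth of β
  have hβge : ∀ n : ℕ, 1 ≤ n → (4 : ℝ) ^ (n - 1) ≤ β n := by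
    intro n hn
    induction n, hn using Nat.le_induction with
    | base => simp [hβ1]
    | succ n hn ih =>
      have h2 : 2 ≤ n + 1 := by omega
      rw [hβ (n + 1) h2]
      simp only [Nat.add_sub_cancel]
      have h4 : (1 : ℝ) ≤ 4 ^ (n - 1) := one_le_pow₀ (by norm_num)
      have hb1 : (1 : ℝ) ≤ β n := le_trans h4 (by simpa using ih)
      have hb6 : (4 : ℝ) ^ (n - 1) ≤ β n ^ 6 := by
        calc (4 : ℝ) ^ (n - 1) ≤ β n := by simpa using ih
          _ ≤ β n ^ 6 := le_self_pow₀ hb1 (by norm_num)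
      have hn2 : (4 : ℝ) ≤ ((n + 1 : ℕ) : ℝ) ^ 2 := by
        have : (2 : ℝ) ≤ ((n + 1 : ℕ) : ℝ) := by exact_mod_cast (by omega : 2 ≤ n + 1)
        nlinarith
      have hpow : (4 : ℝ) ^ n = 4 * 4 ^ (n - 1) := by
        conv_lhs => rw [show n = n - 1 + 1 by omega]
        rw [pow_succ]; ring
      rw [hpow]
      have h0 : (0 : ℝ) ≤ 4 ^ (n - 1) := by positivity
      nlinarith [mul_le_mul hn2 hb6 h0 (by positivity : (0:ℝ) ≤ ((n+1:ℕ):ℝ)^2)]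
  have hβpos : ∀ n : ℕ, 2 ≤ n → (1 : ℝ) ≤ β n := by
    intro n hn
    refine le_trans ?_ (hβge n (by omega))
    exact one_le_pow₀ (by norm_num)
  have hγpos : ∀ n : ℕ, 2 ≤ n → 0 < γ n := by
    intro n hn
    rw [hγ]
    exact inv_pos.2 (lt_of_lt_of_le one_pos (hβpos n hn))
  -- the key bound
  have hsqrtγ : ∀ n : ℕ, 2 ≤ n → α n * γ n = Real.sqrt (γ n) := by
    intro n hn
    have hb0 : (0 : ℝ) < β n := lt_of_lt_of_le one_pos (hβpos n hn)
    rw [hα, hγ, Real.sqrt_inv]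
    set s := Real.sqrt (β n) with hs
    have hsne : s ≠ 0 := ne_of_gt (Real.sqrt_pos.2 hb0)
    have h2 : s * s = β n := Real.mul_self_sqrt hb0.le
    rw [← h2, mul_inv, ← mul_assoc, mul_inv_cancel₀ hsne, one_mul]
  have hkey : ∀ n : ℕ, 2 ≤ n → ∀ t ω,
      |α n * (B t ω - Bc (γ n) t ω)| ≤ Real.sqrt (γ n) := by
    intro n hn t ω
    have hαnn : 0 ≤ α n := by rw [hα]; exact Real.sqrt_nonneg _
    calc |α n * (B t ω - Bc (γ n) t ω)| = α n * |B t ω - Bc (γ n) t ω| := by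
          rw [abs_mul, abs_of_nonneg hαnn]
      _ ≤ α n * γ n :=
          mul_le_mul_of_nonneg_left (happrox (γ n) (hγpos n hn) t ω) hαnn
      _ = Real.sqrt (γ n) := hsqrtγ n hn
  -- summable bound
  set u : ℕ → ℝ := fun n => if 2 ≤ n then Real.sqrt (γ n) else 0 with hu_def
  have hu_nonneg : ∀ n, 0 ≤ u n := by
    intro n; simp only [hu_def]; split_ifs
    · exact Real.sqrt_nonneg _
    · exact le_refl 0
  have hu_le : ∀ n, u n ≤ 2 * (1 / 2 : ℝ) ^ n := by
    intro n
    simp only [hu_def]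
    split_ifs with hn
    · have hb0 : (0 : ℝ) < β n := lt_of_lt_of_le one_pos (hβpos n hn)
      have h1 : Real.sqrt (γ n) = (Real.sqrt (β n))⁻¹ := by rw [hγ, Real.sqrt_inv]
      have h2 : (2 : ℝ) ^ (n - 1) ≤ Real.sqrt (β n) := by
        have h3 : Real.sqrt ((4 : ℝ) ^ (n - 1)) ≤ Real.sqrt (β n) :=
          Real.sqrt_le_sqrt (hβge n (by omega))
        have h4 : Real.sqrt ((4 : ℝ) ^ (n - 1)) = 2 ^ (n - 1) := by
          have : ((4 : ℝ)) ^ (n - 1) = ((2 : ℝ) ^ (n - 1)) ^ 2 := by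
            rw [← pow_mul, (by norm_num : (4 : ℝ) = 2 ^ 2), ← pow_mul]
            ring_nf
          rw [this, Real.sqrt_sq (by positivity)]
        rwa [h4] at h3
      have h5 : (Real.sqrt (β n))⁻¹ ≤ ((2 : ℝ) ^ (n - 1))⁻¹ := by
        apply inv_anti₀ (by positivity) h2
      have h6 : ((2 : ℝ) ^ (n - 1))⁻¹ = 2 * (1 / 2 : ℝ) ^ n := by
        rw [show n = n - 1 + 1 by omega, Nat.add_sub_cancel, pow_succ]
        have hx : ((1 : ℝ) / 2) ^ (n - 1) = ((2 : ℝ) ^ (n - 1))⁻¹ := by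
          rw [one_div, inv_pow]
        rw [hx]; ring
      rw [h1, ← h6]; exact h5
    · positivity
  have hu : Summable u :=
    Summable.of_nonneg_of_le hu_nonneg hu_le
      ((summable_geometric_of_lt_one (by norm_num) (by norm_num)).mul_left 2)
  -- termwise bound with u
  have hterm : ∀ n : ℕ, ∀ t ω,
      ‖(if 2 ≤ n then α n * (B t ω - Bc (γ n) t ω) else 0)‖ ≤ u n := by
    intro n t ω
    simp only [hu_def, Real.norm_eq_abs]
    split_ifs with hn
    · exact hkey n hn t ω
    · simp
  -- summability of the terms pointwise
  have hsum : ∀ t ω, Summable fun n : ℕ =>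
      (if 2 ≤ n then α n * (B t ω - Bc (γ n) t ω) else 0) := by
    intro t ω
    exact Summable.of_norm_bounded hu (fun n => hterm n t ω)
  refine ⟨hkey, ?_, ?_, ?_, ?_⟩
  · -- uniform convergence
    intro ω
    have : (fun t => Y t ω) =
        fun t => ∑' n : ℕ, (if 2 ≤ n then α n * (B t ω - Bc (γ n) t ω) else 0) :=
      funext fun t => hYdef t ω
    rw [this]
    exact tendstoUniformly_tsum_nat hu (fun n t => hterm n t ω)
  · -- boundedness
    refine ⟨∑' n, u n, fun t ω => ?_⟩
    rw [hYdef]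
    have hns : Summable fun n : ℕ =>
        ‖(if 2 ≤ n then α n * (B t ω - Bc (γ n) t ω) else 0)‖ :=
      Summable.of_nonneg_of_le (fun n => norm_nonneg _) (fun n => hterm n t ω) hu
    calc |∑' n : ℕ, (if 2 ≤ n then α n * (B t ω - Bc (γ n) t ω) else 0)|
        ≤ ∑' n : ℕ, ‖(if 2 ≤ n then α n * (B t ω - Bc (γ n) t ω) else 0)‖ :=
          norm_tsum_le_tsum_norm hns
      _ ≤ ∑' n, u n := Summable.tsum_le_tsum (fun n => hterm n t ω) hns hu
  · -- continuity
    intro ω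
    have htu : TendstoUniformly
        (fun N t => ∑ n ∈ Finset.range N,
          if 2 ≤ n then α n * (B t ω - Bc (γ n) t ω) else 0)
        (fun t => ∑' n : ℕ, (if 2 ≤ n then α n * (B t ω - Bc (γ n) t ω) else 0))
        atTop := tendstoUniformly_tsum_nat hu (fun n t => hterm n t ω)
    have hY : (fun t => Y t ω) =
        fun t => ∑' n : ℕ, (if 2 ≤ n then α n * (B t ω - Bc (γ n) t ω) else 0) :=
      funext fun t => hYdef t ω
    rw [hY]
    apply htu.continuous
    apply Filter.Eventually.frequently
    filter_upwards with N
    apply continuous_finset_sum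
    intro n _
    by_cases hn : 2 ≤ n
    · simp only [if_pos hn]
      exact continuous_const.mul ((hB.2.1 ω).sub (hcont (γ n) (hγpos n hn) ω))
    · simp only [if_neg hn]; exact continuous_const
  · -- adaptedness
    intro t
    letI : MeasurableSpace Ω := naturalSigma B t
    have hBt : Measurable[naturalSigma B t] (B t) := by
      have hle : MeasurableSpace.comap (B t) inferInstance ≤ naturalSigma B t :=
        le_biSup (fun s => MeasurableSpace.comap (B s) inferInstance) (mem_Iic.2 le_rfl)
      exact measurable_iff_comap_le.2 hle
    have hg : ∀ n : ℕ, Measurable[naturalSigma B t]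
        fun ω => (if 2 ≤ n then α n * (B t ω - Bc (γ n) t ω) else 0 : ℝ) := by
      intro n
      by_cases hn : 2 ≤ n
      · simp only [if_pos hn]
        exact Measurable.const_mul (Measurable.sub hBt (hadp (γ n) (hγpos n hn) t)) (α n)
      · simp only [if_neg hn]; exact measurable_const
    have hps : ∀ N : ℕ, Measurable[naturalSigma B t]
        fun ω => ∑ n ∈ Finset.range N,
          (if 2 ≤ n then α n * (B t ω - Bc (γ n) t ω) else 0 : ℝ) := by
      intro N
      exact Finset.measurable_sum _ (fun n _ => hg n)
    apply measurable_of_tendsto_metrizable hps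
    rw [tendsto_pi_nhds]
    intro ω
    have := (hsum t ω).hasSum.tendsto_sum_nat
    rw [hYdef t ω]
    exact this

end
end
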